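/- A sequent J is derivable in LK⁻ (the cut-free sequent calculus) if and only if it is derivable in LK (with cut), if and only if every full interpretation satisfies J, if and only if every J-interpretation satisfies J. -/

import Mathlib

open FirstOrder FirstOrder.Language

namespace PaperSat

variable {L : Language} {α : Type*}

/-- A formula in context: a bounded formula together with its number of bound variables. -/
abbrev Fml (L : Language) (α : Type*) : Type _ := Σ n, L.BoundedFormula α n

/-- `Sub φ ψ` means that `φ` is a subformula (or subexpression) of `ψ`. -/
inductive Sub {L : Language} {α : Type*} : Fml L α → Fml L α → Prop
  | refl (φ : Fml L α) : Sub φ φ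
  | impLeft {φ : Fml L α} {n : ℕ} (f g : L.BoundedFormula α n) :
      Sub φ ⟨n, f⟩ → Sub φ ⟨n, f.imp g⟩
  | impRight {φ : Fml L α} {n : ℕ} (f g : L.BoundedFormula α n) :
      Sub φ ⟨n, g⟩ → Sub φ ⟨n, f.imp g⟩
  | allOf {φ : Fml L α} {n : ℕ} (f : L.BoundedFormula α (n + 1)) :
      Sub φ ⟨n + 1, f⟩ → Sub φ ⟨n, f.all⟩

/-- Membership in the subformula closure of a class `Φ` of formulas. -/
def InCl (Φ : Set (Fml L α)) (φ : Fml L α) : Prop := ∃ ψ ∈ Φ, Sub φ ψ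

variable (M : Type*) [L.Structure M]

/-- `IsSatRel M Φ T` says that `T` is a `Φ`-satisfaction relation for the structure `M`:
a relation on pairs consisting of a subformula of a member of `Φ` and an assignment,
satisfying the usual Tarskian recursion clauses. -/
def IsSatRel (Φ : Set (Fml L α))
    (T : ∀ n, L.BoundedFormula α n → (α → M) → (Fin n → M) → Prop) : Prop :=
  (∀ (n : ℕ) (v : α → M) (xs : Fin n → M), InCl Φ ⟨n, BoundedFormula.falsum⟩ →
      ¬ T n BoundedFormula.falsum v xs) ∧
  (∀ (n : ℕ) (t₁ t₂ : L.Term (α ⊕ Fin n)) (v : α → M) (xs : Fin n → M),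
      InCl Φ ⟨n, t₁.bdEqual t₂⟩ →
      (T n (t₁.bdEqual t₂) v xs ↔ t₁.realize (Sum.elim v xs) = t₂.realize (Sum.elim v xs))) ∧
  (∀ (n l : ℕ) (R : L.Relations l) (ts : Fin l → L.Term (α ⊕ Fin n)) (v : α → M)
      (xs : Fin n → M), InCl Φ ⟨n, BoundedFormula.rel R ts⟩ →
      (T n (BoundedFormula.rel R ts) v xs ↔
        Structure.RelMap R fun i => (ts i).realize (Sum.elim v xs))) ∧
  (∀ (n : ℕ) (f g : L.BoundedFormula α n) (v : α → M) (xs : Fin n → M),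
      InCl Φ ⟨n, f.imp g⟩ → (T n (f.imp g) v xs ↔ (T n f v xs → T n g v xs))) ∧
  (∀ (n : ℕ) (f : L.BoundedFormula α (n + 1)) (v : α → M) (xs : Fin n → M),
      InCl Φ ⟨n, f.all⟩ → (T n f.all v xs ↔ ∀ x : M, T (n + 1) f v (Fin.snoc xs x)))

end PaperSat

namespace PaperLK

open FirstOrder FirstOrder.Language

variable {L : Language}

/-- Instantiation of the bound variable of a formula with one extra bound variable
by a term with free variables in `ℕ`. -/
def inst1 (f : L.BoundedFormula ℕ 1) (t : L.Term ℕ) : L.Formula ℕ :=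
  f.toFormula.subst (Sum.elim Term.var fun _ => t)

/-- The equality formula between two terms, as a formula with free variables in `ℕ`. -/
def eqT (t u : L.Term ℕ) : L.Formula ℕ :=
  (t.relabel Sum.inl).bdEqual (u.relabel Sum.inl)

/-- Gentzen's sequent calculus `LK` for classical first-order logic, on sequents of formulas
with free variables in `ℕ`.  The boolean parameter `cut` controls whether the cut rule is
available (`LK false eq` is the cut-free calculus `LK⁻`), and the boolean parameter `eq`
controls whether the rules for the identity predicate are available (`eq = false` gives logic
without identity). -/
inductive LK (cut eq : Bool) : List (L.Formula ℕ) → List (L.Formula ℕ) → Prop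
  | ax (φ : L.Formula ℕ) : LK cut eq [φ] [φ]
  | falsumL : LK cut eq [⊥] []
  | wL {Γ Δ} (φ) : LK cut eq Γ Δ → LK cut eq (φ :: Γ) Δ
  | wR {Γ Δ} (φ) : LK cut eq Γ Δ → LK cut eq Γ (Δ ++ [φ])
  | cL {Γ Δ} {φ} : LK cut eq (φ :: φ :: Γ) Δ → LK cut eq (φ :: Γ) Δ
  | cR {Γ Δ} {φ} : LK cut eq Γ (Δ ++ [φ, φ]) → LK cut eq Γ (Δ ++ [φ])
  | eL {Γ₁ Γ₂ Δ} {φ ψ} : LK cut eq (Γ₁ ++ φ :: ψ :: Γ₂) Δ → LK cut eq (Γ₁ ++ ψ :: φ :: Γ₂) Δ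
  | eR {Γ Δ₁ Δ₂} {φ ψ} : LK cut eq Γ (Δ₁ ++ φ :: ψ :: Δ₂) → LK cut eq Γ (Δ₁ ++ ψ :: φ :: Δ₂)
  | impL {Γ Γ' Δ Δ'} {f g : L.Formula ℕ} :
      LK cut eq Γ (Δ ++ [f]) → LK cut eq (g :: Γ') Δ' →
      LK cut eq ((f.imp g) :: (Γ ++ Γ')) (Δ ++ Δ')
  | impR {Γ Δ} {f g : L.Formula ℕ} :
      LK cut eq (f :: Γ) (Δ ++ [g]) → LK cut eq Γ (Δ ++ [f.imp g])
  | allL {Γ Δ} {f : L.BoundedFormula ℕ 1} (t : L.Term ℕ) :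
      LK cut eq ((inst1 f t) :: Γ) Δ → LK cut eq ((BoundedFormula.all f) :: Γ) Δ
  | allR {Γ Δ} {f : L.BoundedFormula ℕ 1} (k : ℕ)
      (hfresh : ∀ ψ ∈ (BoundedFormula.all f) :: (Γ ++ Δ), k ∉ ψ.freeVarFinset) :
      LK cut eq Γ (Δ ++ [inst1 f (Term.var k)]) →
      LK cut eq Γ (Δ ++ [BoundedFormula.all f])
  | cut' {Γ Γ' Δ Δ'} {φ : L.Formula ℕ} (hc : cut = true) :
      LK cut eq Γ (Δ ++ [φ]) → LK cut eq (φ :: Γ') Δ' → LK cut eq (Γ ++ Γ') (Δ ++ Δ')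
  | eqRefl (he : eq = true) (t : L.Term ℕ) : LK cut eq [] [eqT t t]
  | eqSubst {Γ Δ} {f : L.BoundedFormula ℕ 1} (he : eq = true) (t u : L.Term ℕ) :
      LK cut eq Γ (Δ ++ [inst1 f t]) → LK cut eq ((eqT t u) :: Γ) (Δ ++ [inst1 f u])

/-- Provability of a formula from a theory (a class of formulas), via the full sequent
calculus (with cut and with the rules for identity). -/
def ThmOf (Θ : Set (L.Formula ℕ)) (σ : L.Formula ℕ) : Prop :=
  ∃ Γ : List (L.Formula ℕ), (∀ γ ∈ Γ, γ ∈ Θ) ∧ LK true true Γ [σ]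

/-- A formula is a sentence if it has no free variables. -/
def ClosedF (φ : L.Formula ℕ) : Prop := φ.freeVarFinset = ∅

/-- A theory is consistent if there is no sentence such that both it and its negation
are provable. -/
def ConsistentT (Θ : Set (L.Formula ℕ)) : Prop :=
  ¬ ∃ σ : L.Formula ℕ, ClosedF σ ∧ ThmOf Θ σ ∧ ThmOf Θ σ.not

/-- The class of formulas not containing the identity predicate. -/
inductive EqFree : ∀ {n : ℕ}, L.BoundedFormula ℕ n → Prop
  | falsum {n} : EqFree (n := n) BoundedFormula.falsum
  | rel {n l} (R : L.Relations l) (ts : Fin l → L.Term (ℕ ⊕ Fin n)) :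
      EqFree (BoundedFormula.rel R ts)
  | imp {n} {f g : L.BoundedFormula ℕ n} : EqFree f → EqFree g → EqFree (f.imp g)
  | all {n} {f : L.BoundedFormula ℕ (n + 1)} : EqFree f → EqFree (BoundedFormula.all f)

end PaperLK

namespace PaperSat

open FirstOrder FirstOrder.Language

variable {L : Language}

/-- `IsSubVal M Tt Tf` says that the pair of predicates `Tt` (assigned the value *true*) and
`Tf` (assigned the value *false*) is a subvaluation for the structure `M`: a partial
assignment of truth values to formula–assignment pairs that is consistent with the Tarskian
clauses in the weak sense (e.g. a disjunction may be assigned *true* provided at least one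
disjunct is assigned *true*, and may be assigned *false* only if both disjuncts are). -/
def IsSubVal (M : Type*) [L.Structure M]
    (Tt Tf : ∀ n, L.BoundedFormula ℕ n → (ℕ → M) → (Fin n → M) → Prop) : Prop :=
  (∀ n φ v xs, ¬ (Tt n φ v xs ∧ Tf n φ v xs)) ∧
  (∀ (n : ℕ) (v : ℕ → M) (xs : Fin n → M), ¬ Tt n BoundedFormula.falsum v xs) ∧
  (∀ (n : ℕ) (t₁ t₂ : L.Term (ℕ ⊕ Fin n)) (v : ℕ → M) (xs : Fin n → M),
    (Tt n (t₁.bdEqual t₂) v xs → t₁.realize (Sum.elim v xs) = t₂.realize (Sum.elim v xs)) ∧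
    (Tf n (t₁.bdEqual t₂) v xs → t₁.realize (Sum.elim v xs) ≠ t₂.realize (Sum.elim v xs))) ∧
  (∀ (n l : ℕ) (R : L.Relations l) (ts : Fin l → L.Term (ℕ ⊕ Fin n)) (v : ℕ → M)
      (xs : Fin n → M),
    (Tt n (BoundedFormula.rel R ts) v xs →
      Structure.RelMap R (fun i => (ts i).realize (Sum.elim v xs))) ∧
    (Tf n (BoundedFormula.rel R ts) v xs →
      ¬ Structure.RelMap R (fun i => (ts i).realize (Sum.elim v xs)))) ∧
  (∀ (n : ℕ) (f g : L.BoundedFormula ℕ n) (v : ℕ → M) (xs : Fin n → M),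
    (Tt n (f.imp g) v xs → (Tf n f v xs ∨ Tt n g v xs)) ∧
    (Tf n (f.imp g) v xs → (Tt n f v xs ∧ Tf n g v xs))) ∧
  (∀ (n : ℕ) (f : L.BoundedFormula ℕ (n + 1)) (v : ℕ → M) (xs : Fin n → M),
    (Tt n (BoundedFormula.all f) v xs → ∀ x : M, Tt (n + 1) f v (Fin.snoc xs x)) ∧
    (Tf n (BoundedFormula.all f) v xs → ∃ x : M, Tf (n + 1) f v (Fin.snoc xs x)))

end PaperSat

namespace PaperSat

open PaperLK

/-- A full interpretation (a structure together with an assignment of all variables,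
satisfaction being full Tarskian satisfaction) satisfies the sequent `Γ ⇒ Δ`. -/
def FullValid (L : Language) (Γ Δ : List (L.Formula ℕ)) : Prop :=
  ∀ (M : Type) (_ : L.Structure M), Nonempty M → ∀ v : ℕ → M,
    (∀ φ ∈ Γ, Formula.Realize φ v) → ∃ φ ∈ Δ, Formula.Realize φ v

/-- Every `J`-interpretation (a structure, an assignment, and a subvaluation assigning a
truth value to each formula of `J`) satisfies the sequent `Γ ⇒ Δ`. -/
def SubValid (L : Language) (Γ Δ : List (L.Formula ℕ)) : Prop :=
  ∀ (M : Type) (_ : L.Structure M), Nonempty M → ∀ (v : ℕ → M)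
    (Tt Tf : ∀ n, L.BoundedFormula ℕ n → (ℕ → M) → (Fin n → M) → Prop),
    IsSubVal M Tt Tf →
    (∀ φ ∈ Γ ++ Δ, Tt 0 φ v (fun i => i.elim0) ∨ Tf 0 φ v (fun i => i.elim0)) →
    (∀ φ ∈ Γ, Tt 0 φ v (fun i => i.elim0)) →
    ∃ φ ∈ Δ, Tt 0 φ v (fun i => i.elim0)

end PaperSat

namespace PaperLK

open FirstOrder FirstOrder.Language

variable {L : Language} {c e : Bool}

theorem toHeadL {Δ : List (L.Formula ℕ)} {φ : L.Formula ℕ} (Γ₁ : List (L.Formula ℕ)) :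
    ∀ Γ₂, LK c e (Γ₁ ++ φ :: Γ₂) Δ → LK c e (φ :: (Γ₁ ++ Γ₂)) Δ := by
  induction Γ₁ using List.reverseRecOn with
  | nil => intro Γ₂ h; simpa using h
  | append_singleton Γ₁ χ ih =>
    intro Γ₂ h
    have h1 : LK c e (Γ₁ ++ φ :: χ :: Γ₂) Δ :=
      LK.eL (by simpa [List.append_assoc] using h)
    have h2 := ih (χ :: Γ₂) h1
    simpa [List.append_assoc] using h2

theorem fromHeadL {Δ : List (L.Formula ℕ)} {φ : L.Formula ℕ} (Γ₁ : List (L.Formula ℕ)) :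
    ∀ Γ₂, LK c e (φ :: (Γ₁ ++ Γ₂)) Δ → LK c e (Γ₁ ++ φ :: Γ₂) Δ := by
  induction Γ₁ using List.reverseRecOn with
  | nil => intro Γ₂ h; simpa using h
  | append_singleton Γ₁ χ ih =>
    intro Γ₂ h
    have h1 : LK c e (Γ₁ ++ φ :: χ :: Γ₂) Δ := ih (χ :: Γ₂) (by simpa [List.append_assoc] using h)
    have h2 := LK.eL (φ := φ) (ψ := χ) h1
    simpa [List.append_assoc] using h2

theorem toEndR {Γ : List (L.Formula ℕ)} {φ : L.Formula ℕ} :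
    ∀ (Δ₂ Δ₁ : List (L.Formula ℕ)), LK c e Γ (Δ₁ ++ φ :: Δ₂) → LK c e Γ ((Δ₁ ++ Δ₂) ++ [φ]) := by
  intro Δ₂
  induction Δ₂ with
  | nil => intro Δ₁ h; simpa using h
  | cons ψ Δ₂ ih =>
    intro Δ₁ h
    have h1 : LK c e Γ (Δ₁ ++ ψ :: φ :: Δ₂) := LK.eR h
    have h2 := ih (Δ₁ ++ [ψ]) (by simpa [List.append_assoc] using h1)
    simpa [List.append_assoc] using h2

theorem fromEndR {Γ : List (L.Formula ℕ)} {φ : L.Formula ℕ} :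
    ∀ (Δ₂ Δ₁ : List (L.Formula ℕ)), LK c e Γ ((Δ₁ ++ Δ₂) ++ [φ]) → LK c e Γ (Δ₁ ++ φ :: Δ₂) := by
  intro Δ₂
  induction Δ₂ with
  | nil => intro Δ₁ h; simpa using h
  | cons ψ Δ₂ ih =>
    intro Δ₁ h
    have h1 : LK c e Γ ((Δ₁ ++ [ψ]) ++ φ :: Δ₂) := ih (Δ₁ ++ [ψ]) (by simpa [List.append_assoc] using h)
    have h2 := LK.eR (φ := ψ) (ψ := φ) (by simpa [List.append_assoc] using h1)
    exact h2

theorem weakLs {Γ Δ : List (L.Formula ℕ)} (Γ₀ : List (L.Formula ℕ)) (h : LK c e Γ Δ) :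
    LK c e (Γ₀ ++ Γ) Δ := by
  induction Γ₀ with
  | nil => simpa using h
  | cons ψ Γ₀ ih => exact LK.wL ψ ih

theorem weakRs {Γ Δ : List (L.Formula ℕ)} (Δ₀ : List (L.Formula ℕ)) (h : LK c e Γ Δ) :
    LK c e Γ (Δ ++ Δ₀) := by
  induction Δ₀ using List.reverseRecOn with
  | nil => simpa using h
  | append_singleton Δ₀ ψ ih =>
    have := LK.wR ψ ih
    simpa [List.append_assoc] using this

theorem contrL {Γ Δ : List (L.Formula ℕ)} {φ : L.Formula ℕ} (hφ : φ ∈ Γ)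
    (h : LK c e (φ :: Γ) Δ) : LK c e Γ Δ := by
  obtain ⟨Γ₁, Γ₂, rfl⟩ := List.append_of_mem hφ
  have h1 := toHeadL (φ :: Γ₁) Γ₂ (by simpa using h)
  have h2 : LK c e (φ :: (Γ₁ ++ Γ₂)) Δ := LK.cL (by simpa using h1)
  exact fromHeadL Γ₁ Γ₂ h2

theorem contrR {Γ Δ : List (L.Formula ℕ)} {φ : L.Formula ℕ} (hφ : φ ∈ Δ)
    (h : LK c e Γ (Δ ++ [φ])) : LK c e Γ Δ := by
  obtain ⟨Δ₁, Δ₂, rfl⟩ := List.append_of_mem hφ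
  have h1 := toEndR (Δ₂ ++ [φ]) Δ₁ (by simpa [List.append_assoc] using h)
  have h2 : LK c e Γ ((Δ₁ ++ Δ₂) ++ [φ]) := LK.cR (by simpa [List.append_assoc] using h1)
  exact fromEndR Δ₂ Δ₁ h2

theorem auxR {Γ Δ' : List (L.Formula ℕ)} :
    ∀ (Δ₀ : List (L.Formula ℕ)), (∀ ψ ∈ Δ₀, ψ ∈ Δ') → LK c e Γ (Δ₀ ++ Δ') → LK c e Γ Δ' := by
  intro Δ₀
  induction Δ₀ with
  | nil => intro _ h; simpa using h
  | cons ψ Δ₀ ih =>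
    intro hm h
    have h1 := toEndR (Δ₀ ++ Δ') [] (by simpa using h)
    have h2 : LK c e Γ (Δ₀ ++ Δ') :=
      contrR (List.mem_append.mpr (Or.inr (hm ψ List.mem_cons_self))) (by simpa using h1)
    exact ih (fun x hx => hm x (List.mem_cons_of_mem _ hx)) h2

theorem auxL' {Γ' Δ : List (L.Formula ℕ)} :
    ∀ (Γ₀ : List (L.Formula ℕ)), (∀ ψ ∈ Γ₀, ψ ∈ Γ') → LK c e (Γ' ++ Γ₀) Δ → LK c e Γ' Δ := by
  intro Γ₀
  induction Γ₀ using List.reverseRecOn with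
  | nil => intro _ h; simpa using h
  | append_singleton Γ₀ ψ ih =>
    intro hm h
    have h1 := toHeadL (Γ' ++ Γ₀) [] (by simpa [List.append_assoc] using h)
    have h2 : LK c e (Γ' ++ Γ₀) Δ :=
      contrL (List.mem_append.mpr (Or.inl (hm ψ (by simp)))) (by simpa using h1)
    exact ih (fun x hx => hm x (by simp [hx])) h2

theorem lkMono {Γ Δ Γ' Δ' : List (L.Formula ℕ)} (h : LK c e Γ Δ)
    (hΓ : ∀ ψ ∈ Γ, ψ ∈ Γ') (hΔ : ∀ ψ ∈ Δ, ψ ∈ Δ') : LK c e Γ' Δ' := by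
  have h1 : LK c e Γ (Δ ++ Δ') := weakRs Δ' h
  have h2 : LK c e Γ Δ' := auxR Δ hΔ h1
  have h3 : LK c e (Γ' ++ Γ) Δ' := weakLs Γ' h2
  exact auxL' Γ hΓ h3

theorem LK.ofMem {Γ Δ : List (L.Formula ℕ)} {φ : L.Formula ℕ} (h1 : φ ∈ Γ) (h2 : φ ∈ Δ) :
    LK c e Γ Δ :=
  lkMono (LK.ax φ) (by simpa) (by simpa)

theorem LK.ofFalsum {Γ Δ : List (L.Formula ℕ)} (h : (⊥ : L.Formula ℕ) ∈ Γ) : LK c e Γ Δ :=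
  lkMono LK.falsumL (by simpa) (by simp)

theorem LK.castTrue {Γ Δ : List (L.Formula ℕ)} (h : LK c e Γ Δ) : LK true e Γ Δ := by
  induction h with
  | ax φ => exact .ax φ
  | falsumL => exact .falsumL
  | wL φ _ ih => exact .wL φ ih
  | wR φ _ ih => exact .wR φ ih
  | cL _ ih => exact .cL ih
  | cR _ ih => exact .cR ih
  | eL _ ih => exact .eL ih
  | eR _ ih => exact .eR ih
  | impL _ _ ih1 ih2 => exact .impL ih1 ih2
  | impR _ ih => exact .impR ih
  | allL t _ ih => exact .allL t ih
  | allR k hfresh _ ih => exact .allR k hfresh ih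
  | cut' hc _ _ ih1 ih2 => exact .cut' rfl ih1 ih2
  | eqRefl he t => exact .eqRefl he t
  | eqSubst he t u _ ih => exact .eqSubst he t u ih

end PaperLK
namespace PaperSat

open FirstOrder FirstOrder.Language PaperLK

variable {L : Language}

theorem term_realize_congr {M : Type*} [L.Structure M] {n : ℕ} {v v' : ℕ → M} {xs : Fin n → M} :
    ∀ t : L.Term (ℕ ⊕ Fin n), (∀ a ∈ t.varFinsetLeft, v a = v' a) →
      t.realize (Sum.elim v xs) = t.realize (Sum.elim v' xs) := by
  intro t
  induction t with
  | var a =>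
    intro h
    cases a with
    | inl a =>
      refine h a ?_
      show a ∈ ({a} : Finset ℕ)
      simp
    | inr i => rfl
  | func f ts ih =>
    intro h
    simp only [Term.realize]
    congr 1
    funext i
    refine ih i fun a ha => h a ?_
    show a ∈ Finset.univ.biUnion fun j => (ts j).varFinsetLeft
    exact Finset.mem_biUnion.mpr ⟨i, Finset.mem_univ i, ha⟩

theorem realize_congr_freeVar {M : Type*} [L.Structure M] :
    ∀ {n} (φ : L.BoundedFormula ℕ n) {v v' : ℕ → M} (xs : Fin n → M),
      (∀ a ∈ φ.freeVarFinset, v a = v' a) → (φ.Realize v xs ↔ φ.Realize v' xs) := by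
  intro n φ
  induction φ with
  | falsum => exact fun _ _ => Iff.rfl
  | equal t₁ t₂ =>
    intro v v' xs h
    simp only [BoundedFormula.Realize]
    rw [term_realize_congr t₁ fun a ha => h a (by simp [BoundedFormula.freeVarFinset, ha]),
      term_realize_congr t₂ fun a ha => h a (by simp [BoundedFormula.freeVarFinset, ha])]
  | rel R ts =>
    intro v v' xs h
    simp only [BoundedFormula.Realize]
    have : (fun i => (ts i).realize (Sum.elim v xs)) = fun i => (ts i).realize (Sum.elim v' xs) := by
      funext i
      refine term_realize_congr (ts i) fun a ha => h a ?_
      show a ∈ Finset.univ.biUnion fun j => (ts j).varFinsetLeft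
      exact Finset.mem_biUnion.mpr ⟨i, Finset.mem_univ i, ha⟩
    rw [this]
  | imp f g ih1 ih2 =>
    intro v v' xs h
    simp only [BoundedFormula.realize_imp]
    rw [ih1 xs fun a ha => h a (by simp [BoundedFormula.freeVarFinset, ha]),
      ih2 xs fun a ha => h a (by simp [BoundedFormula.freeVarFinset, ha])]
  | all f ih =>
    intro v v' xs h
    simp only [BoundedFormula.realize_all]
    exact forall_congr' fun a => ih _ fun b hb => h b hb

theorem snoc0 {M : Type*} (xs : Fin 0 → M) (a : M) : (Fin.snoc xs a : Fin 1 → M) = fun _ => a := by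
  funext i
  fin_cases i
  simp [Fin.snoc]

theorem realize0 {M : Type*} [L.Structure M] (φ : L.Formula ℕ) (v : ℕ → M) (xs : Fin 0 → M) :
    BoundedFormula.Realize φ v xs ↔ Formula.Realize φ v := by
  have hxs : xs = (default : Fin 0 → M) := funext fun i => i.elim0
  rw [Formula.Realize, hxs]

theorem realize_inst1 {M : Type*} [L.Structure M] (f : L.BoundedFormula ℕ 1) (t : L.Term ℕ)
    (v : ℕ → M) : Formula.Realize (inst1 f t) v ↔ f.Realize v (fun _ => t.realize v) := by
  rw [inst1, Formula.Realize, BoundedFormula.realize_subst]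
  have h := BoundedFormula.realize_toFormula f
      (fun a => Term.realize v (Sum.elim Term.var (fun _ => t) a))
  rw [Formula.Realize] at h
  rw [h]
  constructor
  · intro hh
    convert hh using 2 <;> rfl
  · intro hh
    convert hh using 2 <;> rfl

theorem fvMono {Γ Δ Γ' Δ' : List (L.Formula ℕ)} (h : FullValid L Γ Δ)
    (hΓ : ∀ φ ∈ Γ, φ ∈ Γ') (hΔ : ∀ φ ∈ Δ, φ ∈ Δ') : FullValid L Γ' Δ' := by
  intro M S hM v hv
  obtain ⟨ψ, h1, h2⟩ := h M S hM v fun φ hφ => hv φ (hΓ φ hφ)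
  exact ⟨ψ, hΔ ψ h1, h2⟩

theorem lkSound {c : Bool} {Γ Δ : List (L.Formula ℕ)} (h : LK c false Γ Δ) :
    FullValid L Γ Δ := by
  induction h with
  | ax φ => exact fun M S hM v hv => ⟨φ, by simp, hv φ (by simp)⟩
  | falsumL => exact fun M S hM v hv => absurd (hv ⊥ (by simp)) (by simp)
  | wL φ _ ih => exact fvMono ih (by intro x hx; simp [hx]) (by simp)
  | wR φ _ ih => exact fvMono ih (by simp) (by intro x hx; simp [hx])
  | cL _ ih => exact fvMono ih (by intro x hx; simp at hx ⊢; tauto) (by simp)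
  | cR _ ih => exact fvMono ih (by simp) (by intro x hx; simp at hx ⊢; tauto)
  | eL _ ih =>
    refine fvMono ih ?_ (fun x hx => hx)
    intro x hx
    simp only [List.mem_append, List.mem_cons] at hx ⊢
    tauto
  | eR _ ih =>
    refine fvMono ih (fun x hx => hx) ?_
    intro x hx
    simp only [List.mem_append, List.mem_cons] at hx ⊢
    tauto
  | @impL Γ Γ' Δ Δ' f g _ _ ih1 ih2 =>
    intro M S hM v hv
    obtain ⟨ψ, h1, h2⟩ := ih1 M S hM v fun φ hφ => hv φ (by simp [hφ])
    rcases List.mem_append.mp h1 with h1 | h1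
    · exact ⟨ψ, by simp [h1], h2⟩
    · have hfg : Formula.Realize (f.imp g) v := hv _ (by simp)
      have hg : Formula.Realize g v := by
        rw [Formula.realize_imp] at hfg
        exact hfg (by simpa [List.mem_singleton.mp h1] using h2)
      obtain ⟨χ, h3, h4⟩ := ih2 M S hM v (by
        intro φ hφ
        rcases List.mem_cons.mp hφ with rfl | hφ
        · exact hg
        · exact hv φ (by simp [hφ]))
      exact ⟨χ, by simp [h3], h4⟩
  | @impR Γ Δ f g _ ih =>
    intro M S hM v hv
    by_cases hf : Formula.Realize f v
    · obtain ⟨ψ, h1, h2⟩ := ih M S hM v (by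
        intro φ hφ
        rcases List.mem_cons.mp hφ with rfl | hφ
        · exact hf
        · exact hv φ hφ)
      rcases List.mem_append.mp h1 with h1 | h1
      · exact ⟨ψ, by simp [h1], h2⟩
      · refine ⟨f.imp g, by simp, ?_⟩
        rw [Formula.realize_imp]
        exact fun _ => by simpa [List.mem_singleton.mp h1] using h2
    · refine ⟨f.imp g, by simp, ?_⟩
      rw [Formula.realize_imp]
      exact fun hf' => absurd hf' hf
  | @allL Γ Δ f t _ ih =>
    intro M S hM v hv
    have hall : Formula.Realize (BoundedFormula.all f) v := hv _ (by simp)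
    have : f.Realize v (fun _ => t.realize v) := by
      rw [Formula.Realize, BoundedFormula.realize_all] at hall
      have := hall (t.realize v)
      rwa [snoc0] at this
    refine ih M S hM v ?_
    intro φ hφ
    rcases List.mem_cons.mp hφ with rfl | hφ
    · exact (realize_inst1 f t v).mpr this
    · exact hv φ (List.mem_cons_of_mem _ hφ)
  | @allR Γ Δ f k hfresh _ ih =>
    intro M S hM v hv
    by_cases hΔ : ∃ φ ∈ Δ, Formula.Realize φ v
    · obtain ⟨ψ, h1, h2⟩ := hΔ
      exact ⟨ψ, by simp [h1], h2⟩
    · refine ⟨BoundedFormula.all f, by simp, ?_⟩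
      rw [Formula.Realize, BoundedFormula.realize_all]
      intro a
      have hupd : ∀ (ψ : L.Formula ℕ), k ∉ ψ.freeVarFinset → ∀ xs : Fin 0 → M,
          (BoundedFormula.Realize ψ v xs ↔ BoundedFormula.Realize ψ (Function.update v k a) xs) := by
        intro ψ hk xs
        refine realize_congr_freeVar ψ xs fun b hb => ?_
        have hne : b ≠ k := fun hbk => hk (hbk ▸ hb)
        rw [Function.update_of_ne hne]
      obtain ⟨ψ, h1, h2⟩ := ih M S hM (Function.update v k a) (by
        intro φ hφ
        have hk : k ∉ φ.freeVarFinset := hfresh φ (by simp [hφ])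
        rw [Formula.Realize, ← hupd φ hk]
        exact hv φ hφ)
      rcases List.mem_append.mp h1 with h1 | h1
      · exfalso
        refine hΔ ⟨ψ, h1, ?_⟩
        have hk : k ∉ ψ.freeVarFinset := hfresh ψ (by simp [h1])
        rw [Formula.Realize, hupd ψ hk]
        exact h2
      · have h2' : Formula.Realize (inst1 f (Term.var k)) (Function.update v k a) := by
          simpa [List.mem_singleton.mp h1] using h2
        rw [realize_inst1] at h2'
        have hra : f.Realize (Function.update v k a) (fun _ => a) := by
          simpa [Function.update_self] using h2'
        have hk : k ∉ f.freeVarFinset := by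
          have := hfresh (BoundedFormula.all f) (by simp)
          simpa [BoundedFormula.freeVarFinset] using this
        have hfin := (realize_congr_freeVar f (fun _ => a) (v := v)
          (v' := Function.update v k a) (fun b hb => by
            have hne : b ≠ k := fun hbk => hk (hbk ▸ hb)
            rw [Function.update_of_ne hne])).mpr hra
        rwa [snoc0]
  | @cut' Γ Γ' Δ Δ' φ hc _ _ ih1 ih2 =>
    intro M S hM v hv
    obtain ⟨ψ, h1, h2⟩ := ih1 M S hM v fun χ hχ => hv χ (by simp [hχ])
    rcases List.mem_append.mp h1 with h1 | h1
    · exact ⟨ψ, by simp [h1], h2⟩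
    · obtain ⟨χ, h3, h4⟩ := ih2 M S hM v (by
        intro χ hχ
        rcases List.mem_cons.mp hχ with rfl | hχ
        · simpa [List.mem_singleton.mp h1] using h2
        · exact hv χ (by simp [hχ]))
      exact ⟨χ, by simp [h3], h4⟩
  | eqRefl he t => exact absurd he (by simp)
  | eqSubst he t u _ _ => exact absurd he (by simp)

theorem subval_sound {M : Type} [L.Structure M] {Tt Tf} (h : IsSubVal M Tt Tf) :
    ∀ {n} (φ : L.BoundedFormula ℕ n) (v : ℕ → M) (xs : Fin n → M),
      (Tt n φ v xs → φ.Realize v xs) ∧ (Tf n φ v xs → ¬ φ.Realize v xs) := by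
  obtain ⟨hcon, hfal, heq, hrel, himp, hall⟩ := h
  intro n φ
  induction φ with
  | falsum =>
    intro v xs
    exact ⟨fun ht => absurd ht (hfal _ v xs), fun _ hr => hr⟩
  | equal t₁ t₂ =>
    intro v xs
    constructor
    · intro ht
      exact (heq _ t₁ t₂ v xs).1 ht
    · intro hf hr
      exact (heq _ t₁ t₂ v xs).2 hf hr
  | rel R ts =>
    intro v xs
    constructor
    · intro ht
      exact (hrel _ _ R ts v xs).1 ht
    · intro hf hr
      exact (hrel _ _ R ts v xs).2 hf hr
  | imp f g ih1 ih2 =>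
    intro v xs
    constructor
    · intro ht
      rw [BoundedFormula.realize_imp]
      intro hrf
      rcases (himp _ f g v xs).1 ht with hff | htg
      · exact absurd hrf ((ih1 v xs).2 hff)
      · exact (ih2 v xs).1 htg
    · intro hf
      obtain ⟨htf, hfg⟩ := (himp _ f g v xs).2 hf
      rw [BoundedFormula.realize_imp]
      intro hr
      exact (ih2 v xs).2 hfg (hr ((ih1 v xs).1 htf))
  | all f ih =>
    intro v xs
    constructor
    · intro ht
      rw [BoundedFormula.realize_all]
      intro a
      exact (ih v _).1 ((hall _ f v xs).1 ht a)
    · intro hf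
      obtain ⟨a, ha⟩ := (hall _ f v xs).2 hf
      rw [BoundedFormula.realize_all]
      intro hr
      exact (ih v _).2 ha (hr a)

theorem subValid_of_fullValid {Γ Δ : List (L.Formula ℕ)} (h : FullValid L Γ Δ) :
    SubValid L Γ Δ := by
  intro M S hM v Tt Tf hsv htot hΓ
  have hr : ∀ φ ∈ Γ, Formula.Realize φ v := fun φ hφ =>
    (realize0 φ v (fun i => i.elim0)).mp ((subval_sound hsv φ v (fun i => i.elim0)).1 (hΓ φ hφ))
  obtain ⟨φ, hφ, hrφ⟩ := h M S hM v hr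
  rcases htot φ (by simp [hφ]) with ht | hf
  · exact ⟨φ, hφ, ht⟩
  · exact absurd ((realize0 φ v (fun i => i.elim0)).mpr hrφ) ((subval_sound hsv φ v (fun i => i.elim0)).2 hf)

theorem fullValid_of_subValid {Γ Δ : List (L.Formula ℕ)} (h : SubValid L Γ Δ) :
    FullValid L Γ Δ := by
  intro M S hM v hΓ
  obtain ⟨φ, hφ, ht⟩ := h M S hM v (fun n φ v xs => φ.Realize v xs)
      (fun n φ v xs => ¬ φ.Realize v xs)
      (by
        refine ⟨fun n φ v xs h => h.2 h.1, fun n v xs h => by simpa [BoundedFormula.Realize] using h, ?_, ?_, ?_, ?_⟩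
        · intro n t₁ t₂ v xs
          constructor
          · intro h; simpa [BoundedFormula.Realize] using h
          · intro h; simpa [BoundedFormula.Realize] using h
        · intro n l R ts v xs
          constructor
          · intro h; simpa [BoundedFormula.Realize] using h
          · intro h; simpa [BoundedFormula.Realize] using h
        · intro n f g v xs
          constructor
          · intro h
            rw [BoundedFormula.realize_imp] at h
            by_cases hf : f.Realize v xs
            · exact Or.inr (h hf)
            · exact Or.inl hf
          · intro h
            rw [BoundedFormula.realize_imp] at h
            push_neg at h
            exact h
        · intro n f v xs
          constructor
          · intro h
            rw [BoundedFormula.realize_all] at h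
            exact h
          · intro h
            rw [BoundedFormula.realize_all] at h
            push_neg at h
            exact h)
      (fun φ _ => by
        by_cases hr : BoundedFormula.Realize φ v (fun i => i.elim0)
        · exact Or.inl hr
        · exact Or.inr hr)
      (fun φ hφ => (realize0 φ v (fun i => i.elim0)).mpr (hΓ φ hφ))
  exact ⟨φ, hφ, (realize0 φ v (fun i => i.elim0)).mp ht⟩


section Completeness

open scoped Classical

variable {L : Language}

/-! ### Equality-freeness and depth, stable under substitution -/

def NoEqB : {α : Type} → {n : ℕ} → L.BoundedFormula α n → Prop
  | _, _, .falsum => True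
  | _, _, .equal _ _ => False
  | _, _, .rel _ _ => True
  | _, _, .imp f g => NoEqB f ∧ NoEqB g
  | _, _, .all f => NoEqB f

def dpth : {α : Type} → {n : ℕ} → L.BoundedFormula α n → ℕ
  | _, _, .falsum => 0
  | _, _, .equal _ _ => 0
  | _, _, .rel _ _ => 0
  | _, _, .imp f g => dpth f + dpth g + 1
  | _, _, .all f => dpth f + 1

theorem dpth_mapTermRel {α β : Type} {g : ℕ → ℕ}
    (ft : ∀ n, L.Term (α ⊕ Fin n) → L.Term (β ⊕ Fin (g n)))
    (fr : ∀ n, L.Relations n → L.Relations n)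
    (h : ∀ n, L.BoundedFormula β (g (n + 1)) → L.BoundedFormula β (g n + 1))
    (hh : ∀ n φ, dpth (h n φ) = dpth φ) :
    ∀ {n} (φ : L.BoundedFormula α n), dpth (φ.mapTermRel ft fr h) = dpth φ := by
  intro n φ
  induction φ with
  | falsum => simp [BoundedFormula.mapTermRel, dpth]
  | equal => simp [BoundedFormula.mapTermRel, dpth]
  | rel => simp [BoundedFormula.mapTermRel, dpth]
  | imp f g ihf ihg => simp [BoundedFormula.mapTermRel, dpth, ihf, ihg]
  | all f ihf => simp [BoundedFormula.mapTermRel, dpth, hh, ihf]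

theorem noeq_mapTermRel {α β : Type} {g : ℕ → ℕ}
    (ft : ∀ n, L.Term (α ⊕ Fin n) → L.Term (β ⊕ Fin (g n)))
    (fr : ∀ n, L.Relations n → L.Relations n)
    (h : ∀ n, L.BoundedFormula β (g (n + 1)) → L.BoundedFormula β (g n + 1))
    (hh : ∀ n φ, NoEqB (h n φ) ↔ NoEqB φ) :
    ∀ {n} (φ : L.BoundedFormula α n), NoEqB φ → NoEqB (φ.mapTermRel ft fr h) := by
  intro n φ
  induction φ with
  | falsum => simp [BoundedFormula.mapTermRel, NoEqB]
  | equal => simp [BoundedFormula.mapTermRel, NoEqB]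
  | rel => simp [BoundedFormula.mapTermRel, NoEqB]
  | imp f g ihf ihg =>
    intro hn
    simp only [NoEqB] at hn
    simp [BoundedFormula.mapTermRel, NoEqB, ihf hn.1, ihg hn.2]
  | all f ihf =>
    intro hn
    simp only [NoEqB] at hn
    simp [BoundedFormula.mapTermRel, NoEqB, hh, ihf hn]

theorem dpth_castLE {α : Type} : ∀ {m n : ℕ} (h : m ≤ n) (φ : L.BoundedFormula α m),
    dpth (φ.castLE h) = dpth φ := by
  intro m n h φ
  induction φ generalizing n with
  | falsum => simp [BoundedFormula.castLE, dpth]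
  | equal => simp [BoundedFormula.castLE, dpth]
  | rel => simp [BoundedFormula.castLE, dpth]
  | imp f g ihf ihg => simp [BoundedFormula.castLE, dpth, ihf, ihg]
  | all f ihf => simp [BoundedFormula.castLE, dpth, ihf]

theorem noeq_castLE {α : Type} : ∀ {m n : ℕ} (h : m ≤ n) (φ : L.BoundedFormula α m),
    NoEqB (φ.castLE h) ↔ NoEqB φ := by
  intro m n h φ
  induction φ generalizing n with
  | falsum => simp [BoundedFormula.castLE, NoEqB]
  | equal => simp [BoundedFormula.castLE, NoEqB]
  | rel => simp [BoundedFormula.castLE, NoEqB]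
  | imp f g ihf ihg => simp [BoundedFormula.castLE, NoEqB, ihf, ihg]
  | all f ihf => simp [BoundedFormula.castLE, NoEqB, ihf]

theorem dpth_relabel {α β : Type} {n k : ℕ} (g : α → β ⊕ Fin n) (φ : L.BoundedFormula α k) :
    dpth (φ.relabel g) = dpth φ := by
  rw [BoundedFormula.relabel]
  exact dpth_mapTermRel _ _ _ (fun n ψ => dpth_castLE _ ψ) φ

theorem noeq_relabel {α β : Type} {n k : ℕ} (g : α → β ⊕ Fin n) (φ : L.BoundedFormula α k)
    (h : NoEqB φ) : NoEqB (φ.relabel g) := by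
  rw [BoundedFormula.relabel]
  exact noeq_mapTermRel _ _ _ (fun n ψ => noeq_castLE _ ψ) φ h

theorem dpth_subst {α β : Type} {n : ℕ} (φ : L.BoundedFormula α n) (f : α → L.Term β) :
    dpth (φ.subst f) = dpth φ := by
  induction φ with
  | falsum => simp [BoundedFormula.subst, BoundedFormula.mapTermRel, dpth]
  | equal => simp [BoundedFormula.subst, BoundedFormula.mapTermRel, dpth]
  | rel => simp [BoundedFormula.subst, BoundedFormula.mapTermRel, dpth]
  | imp f g ihf ihg =>
    simp only [BoundedFormula.subst, BoundedFormula.mapTermRel, dpth] at *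
    omega
  | all f ihf =>
    simp only [BoundedFormula.subst, BoundedFormula.mapTermRel, dpth, id] at *
    omega

theorem noeq_subst {α β : Type} {n : ℕ} (φ : L.BoundedFormula α n) (f : α → L.Term β)
    (h : NoEqB φ) : NoEqB (φ.subst f) := by
  induction φ with
  | falsum => simp [BoundedFormula.subst, BoundedFormula.mapTermRel, NoEqB]
  | equal => simp [NoEqB] at h
  | rel => simp [BoundedFormula.subst, BoundedFormula.mapTermRel, NoEqB]
  | imp f g ihf ihg =>
    simp only [NoEqB] at h
    simp only [BoundedFormula.subst, BoundedFormula.mapTermRel, NoEqB] at *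
    exact ⟨ihf h.1, ihg h.2⟩
  | all f ihf =>
    simp only [NoEqB] at h
    simp only [BoundedFormula.subst, BoundedFormula.mapTermRel, NoEqB, id] at *
    exact ihf h

theorem dpth_toFormula {α : Type} : ∀ {n : ℕ} (φ : L.BoundedFormula α n),
    dpth φ.toFormula = dpth φ := by
  intro n φ
  induction φ with
  | falsum => simp [BoundedFormula.toFormula, dpth]
  | equal t u => simp [BoundedFormula.toFormula, Term.equal, Term.bdEqual, dpth]
  | rel R ts => simp [BoundedFormula.toFormula, Relations.formula, Relations.boundedFormula, dpth]
  | imp f g ihf ihg => simp [BoundedFormula.toFormula, dpth, ihf, ihg]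
  | all f ihf => simp [BoundedFormula.toFormula, dpth, dpth_relabel, ihf]

theorem noeq_toFormula {α : Type} : ∀ {n : ℕ} (φ : L.BoundedFormula α n),
    NoEqB φ → NoEqB φ.toFormula := by
  intro n φ
  induction φ with
  | falsum => simp [BoundedFormula.toFormula, NoEqB]
  | equal t u => simp [NoEqB]
  | rel R ts => simp [BoundedFormula.toFormula, Relations.formula, Relations.boundedFormula, NoEqB]
  | imp f g ihf ihg =>
    intro h
    simp only [NoEqB] at h
    simp [BoundedFormula.toFormula, NoEqB, ihf h.1, ihg h.2]
  | all f ihf =>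
    intro h
    simp only [NoEqB] at h
    simp only [BoundedFormula.toFormula, NoEqB]
    exact noeq_relabel _ _ (ihf h)

theorem dpth_inst1 (f : L.BoundedFormula ℕ 1) (t : L.Term ℕ) : dpth (inst1 f t) = dpth f := by
  rw [inst1, dpth_subst, dpth_toFormula]

theorem noeq_inst1 {f : L.BoundedFormula ℕ 1} (t : L.Term ℕ) (h : NoEqB f) :
    NoEqB (inst1 f t) := by
  rw [inst1]
  exact noeq_subst _ _ (noeq_toFormula f h)

theorem noeqB_of_eqFree : ∀ {n : ℕ} {φ : L.BoundedFormula ℕ n}, EqFree φ → NoEqB φ := by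
  intro n φ h
  induction h with
  | falsum => simp [NoEqB]
  | rel R ts => simp [NoEqB]
  | imp h1 h2 ih1 ih2 =>
    simp only [NoEqB]
    exact ⟨ih1, ih2⟩
  | all h ih =>
    simp only [NoEqB]
    exact ih

/-! ### Fresh variables -/

def fvL (l : List (L.Formula ℕ)) : Finset ℕ := l.foldr (fun φ s => φ.freeVarFinset ∪ s) ∅

theorem mem_fvL {l : List (L.Formula ℕ)} {φ : L.Formula ℕ} (hφ : φ ∈ l) {a : ℕ}
    (ha : a ∈ φ.freeVarFinset) : a ∈ fvL l := by
  induction l with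
  | nil => cases hφ
  | cons ψ l ih =>
    rcases List.mem_cons.mp hφ with rfl | h
    · exact Finset.mem_union_left _ ha
    · exact Finset.mem_union_right _ (ih h)

def freshV (l : List (L.Formula ℕ)) : ℕ := (fvL l).sup id + 1

theorem freshV_spec {l : List (L.Formula ℕ)} {φ : L.Formula ℕ} (hφ : φ ∈ l) :
    freshV l ∉ φ.freeVarFinset := by
  intro h
  have := Finset.le_sup (f := id) (mem_fvL hφ h)
  simp only [id, freshV] at this
  omega

/-! ### The saturation procedure -/

noncomputable def lstep : L.Formula ℕ → L.Term ℕ → (List (L.Formula ℕ) × List (L.Formula ℕ)) →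
    (List (L.Formula ℕ) × List (L.Formula ℕ))
  | .imp f g, _, p =>
      if LK false false (g :: p.1) p.2 then (p.1, p.2 ++ [f]) else (g :: p.1, p.2)
  | .all f, t, p => (inst1 f t :: p.1, p.2)
  | _, _, p => p

noncomputable def rstep : L.Formula ℕ → (List (L.Formula ℕ) × List (L.Formula ℕ)) →
    (List (L.Formula ℕ) × List (L.Formula ℕ))
  | .imp f g, p => (f :: p.1, p.2 ++ [g])
  | .all f, p => (p.1, p.2 ++ [inst1 f (Term.var (freshV (p.1 ++ p.2)))])
  | _, p => p

noncomputable def stp (q : L.Formula ℕ × L.Term ℕ)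
    (p : List (L.Formula ℕ) × List (L.Formula ℕ)) :
    List (L.Formula ℕ) × List (L.Formula ℕ) :=
  if q.1 ∈ p.1 then lstep q.1 q.2 p else if q.1 ∈ p.2 then rstep q.1 p else p

noncomputable def chain (task : ℕ → L.Formula ℕ × L.Term ℕ)
    (p0 : List (L.Formula ℕ) × List (L.Formula ℕ)) : ℕ → List (L.Formula ℕ) × List (L.Formula ℕ)
  | 0 => p0
  | n + 1 => stp (task n) (chain task p0 n)

theorem stp_sub (q : L.Formula ℕ × L.Term ℕ) (p : List (L.Formula ℕ) × List (L.Formula ℕ)) :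
    (∀ x ∈ p.1, x ∈ (stp q p).1) ∧ (∀ x ∈ p.2, x ∈ (stp q p).2) := by
  obtain ⟨φ, t⟩ := q
  unfold stp
  split_ifs with h1 h2
  · cases φ with
    | imp f g =>
      simp only [lstep]
      split_ifs with hd <;> constructor <;> intro x hx <;> simp [hx]
    | all f => constructor <;> intro x hx <;> simp [lstep, hx]
    | falsum => exact ⟨fun x hx => hx, fun x hx => hx⟩
    | equal t u => exact ⟨fun x hx => hx, fun x hx => hx⟩
    | rel R ts => exact ⟨fun x hx => hx, fun x hx => hx⟩
  · cases φ with
    | imp f g => constructor <;> intro x hx <;> simp [rstep, hx]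
    | all f => constructor <;> intro x hx <;> simp [rstep, hx]
    | falsum => exact ⟨fun x hx => hx, fun x hx => hx⟩
    | equal t u => exact ⟨fun x hx => hx, fun x hx => hx⟩
    | rel R ts => exact ⟨fun x hx => hx, fun x hx => hx⟩
  · exact ⟨fun x hx => hx, fun x hx => hx⟩

theorem stp_inv (q : L.Formula ℕ × L.Term ℕ) (p : List (L.Formula ℕ) × List (L.Formula ℕ))
    (h : ¬ LK false false p.1 p.2) : ¬ LK false false (stp q p).1 (stp q p).2 := by
  obtain ⟨φ, t⟩ := q
  unfold stp
  split_ifs with h1 h2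
  · cases φ with
    | imp f g =>
      simp only [lstep]
      split_ifs with hd
      · intro hc
        refine h (lkMono (LK.impL hc hd) ?_ ?_)
        · intro x hx
          simp only [List.mem_cons, List.mem_append] at hx
          rcases hx with rfl | hx | hx
          · exact h1
          · exact hx
          · exact hx
        · intro x hx
          simp only [List.mem_append] at hx
          tauto
      · exact hd
    | all f =>
      simp only [lstep]
      intro hc
      refine h (lkMono (LK.allL t hc) ?_ (fun x hx => hx))
      intro x hx
      rcases List.mem_cons.mp hx with rfl | hx
      · exact h1
      · exact hx
    | falsum => exact h
    | equal t u => exact h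
    | rel R ts => exact h
  · cases φ with
    | imp f g =>
      simp only [rstep]
      intro hc
      refine h (contrR h2 (LK.impR ?_))
      exact hc
    | all f =>
      simp only [rstep]
      intro hc
      have hfr : ∀ ψ ∈ (BoundedFormula.all f) :: (p.1 ++ p.2),
          freshV (p.1 ++ p.2) ∉ ψ.freeVarFinset := by
        intro ψ hψ
        rcases List.mem_cons.mp hψ with rfl | hψ
        · exact freshV_spec (List.mem_append.mpr (Or.inr h2))
        · exact freshV_spec hψ
      exact h (contrR h2 (LK.allR _ hfr hc))
    | falsum => exact h
    | equal t u => exact h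
    | rel R ts => exact h
  · exact h

theorem chain_succ (task : ℕ → L.Formula ℕ × L.Term ℕ) (p0) (n : ℕ) :
    chain task p0 (n + 1) = stp (task n) (chain task p0 n) := rfl

theorem chain_le (task : ℕ → L.Formula ℕ × L.Term ℕ) (p0) {m n : ℕ} (h : m ≤ n) :
    (∀ x ∈ (chain task p0 m).1, x ∈ (chain task p0 n).1) ∧
    (∀ x ∈ (chain task p0 m).2, x ∈ (chain task p0 n).2) := by
  induction n with
  | zero =>
    obtain rfl : m = 0 := Nat.le_zero.mp h
    exact ⟨fun x hx => hx, fun x hx => hx⟩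
  | succ n ih =>
    rcases Nat.lt_or_ge m (n + 1) with hlt | hge
    · have hmn : m ≤ n := Nat.lt_succ_iff.mp hlt
      obtain ⟨ih1, ih2⟩ := ih hmn
      obtain ⟨s1, s2⟩ := stp_sub (task n) (chain task p0 n)
      rw [chain_succ]
      exact ⟨fun x hx => s1 x (ih1 x hx), fun x hx => s2 x (ih2 x hx)⟩
    · obtain rfl : m = n + 1 := le_antisymm h hge
      exact ⟨fun x hx => hx, fun x hx => hx⟩

theorem chain_inv (task : ℕ → L.Formula ℕ × L.Term ℕ) (p0)
    (h0 : ¬ LK false false p0.1 p0.2) :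
    ∀ n, ¬ LK false false (chain task p0 n).1 (chain task p0 n).2 := by
  intro n
  induction n with
  | zero => exact h0
  | succ n ih => exact stp_inv _ _ ih

/-! ### The term model -/

def tmS (S : Set (L.Formula ℕ)) : L.Structure (L.Term ℕ) where
  funMap := fun f ts => Term.func f ts
  RelMap := fun {l} R ts =>
    (BoundedFormula.rel R (fun i => (ts i).relabel Sum.inl) : L.Formula ℕ) ∈ S

theorem tmS_rel (S : Set (L.Formula ℕ)) {l : ℕ} (R : L.Relations l) (us : Fin l → L.Term ℕ) :
    @Structure.RelMap L (L.Term ℕ) (tmS S) l R us ↔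
      (BoundedFormula.rel R (fun i => (us i).relabel Sum.inl) : L.Formula ℕ) ∈ S :=
  Iff.rfl

theorem tm_term_realize (S : Set (L.Formula ℕ)) :
    ∀ t : L.Term ℕ, @Term.realize L (L.Term ℕ) (tmS S) ℕ Term.var t = t := by
  intro t
  induction t with
  | var => rfl
  | func f ts ih =>
    show Term.func f (fun i => @Term.realize L (L.Term ℕ) (tmS S) ℕ Term.var (ts i)) = _
    congr 1
    funext i
    exact ih i

theorem tm_unrelabel (S : Set (L.Formula ℕ)) (xs : Fin 0 → L.Term ℕ) :
    ∀ t : L.Term (ℕ ⊕ Fin 0),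
      (@Term.realize L (L.Term ℕ) (tmS S) _ (Sum.elim Term.var xs) t).relabel Sum.inl = t := by
  intro t
  induction t with
  | var a =>
    cases a with
    | inl a => rfl
    | inr i => exact i.elim0
  | func f ts ih =>
    show (Term.func f (fun i => @Term.realize L (L.Term ℕ) (tmS S) _
        (Sum.elim Term.var xs) (ts i))).relabel Sum.inl = _
    simp only [Term.relabel]
    congr 1
    funext i
    exact ih i

theorem truthLemma (S T : Set (L.Formula ℕ))
    (hcon : ∀ φ : L.Formula ℕ, φ ∈ S → φ ∈ T → False)
    (hbot : (⊥ : L.Formula ℕ) ∉ S)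
    (himpS : ∀ f g : L.Formula ℕ, (BoundedFormula.imp f g) ∈ S → g ∈ S ∨ f ∈ T)
    (himpT : ∀ f g : L.Formula ℕ, (BoundedFormula.imp f g) ∈ T → f ∈ S ∧ g ∈ T)
    (hallS : ∀ f : L.BoundedFormula ℕ 1, (BoundedFormula.all f) ∈ S → ∀ t, inst1 f t ∈ S)
    (hallT : ∀ f : L.BoundedFormula ℕ 1, (BoundedFormula.all f) ∈ T → ∃ t, inst1 f t ∈ T) :
    ∀ φ : L.Formula ℕ, NoEqB φ →
      (φ ∈ S → @Formula.Realize L (L.Term ℕ) (tmS S) ℕ φ Term.var) ∧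
      (φ ∈ T → ¬ @Formula.Realize L (L.Term ℕ) (tmS S) ℕ φ Term.var) := by
  letI : L.Structure (L.Term ℕ) := tmS S
  have main : ∀ d (φ : L.Formula ℕ), dpth φ = d → NoEqB φ →
      (φ ∈ S → Formula.Realize φ (Term.var : ℕ → L.Term ℕ)) ∧
      (φ ∈ T → ¬ Formula.Realize φ (Term.var : ℕ → L.Term ℕ)) := by
    intro d
    induction d using Nat.strong_induction_on with
    | _ d ih =>
      intro φ hd hne
      cases φ with
      | falsum =>
        refine ⟨fun h => absurd h hbot, fun _ hr => ?_⟩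
        exact hr
      | equal t u => exact absurd hne (by simp [NoEqB])
      | rel R ts =>
        have hts : (fun i => ((ts i).realize (Sum.elim Term.var (default : Fin 0 → L.Term ℕ))).relabel Sum.inl) = ts :=
          funext fun i => tm_unrelabel S default (ts i)
        have hiff : Formula.Realize (BoundedFormula.rel R ts) (Term.var : ℕ → L.Term ℕ) ↔
            (BoundedFormula.rel R ts : L.Formula ℕ) ∈ S := by
          rw [show (BoundedFormula.rel R ts : L.Formula ℕ) = R.boundedFormula ts from rfl,
            Formula.Realize, BoundedFormula.realize_rel, tmS_rel]
          simp only [tm_unrelabel S]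
          exact Iff.rfl
        exact ⟨hiff.mpr, fun hT hr => hcon _ (hiff.mp hr) hT⟩
      | imp f g =>
        have hne' : NoEqB f ∧ NoEqB g := by simpa [NoEqB] using hne
        have hdd : dpth f + dpth g + 1 = d := by simpa [dpth] using hd
        have ihf := ih (dpth f) (by omega) f rfl hne'.1
        have ihg := ih (dpth g) (by omega) g rfl hne'.2
        constructor
        · intro hS
          rw [Formula.realize_imp]
          intro hrf
          rcases himpS f g hS with hgS | hfT
          · exact ihg.1 hgS
          · exact absurd hrf (ihf.2 hfT)
        · intro hT
          obtain ⟨hfS, hgT⟩ := himpT f g hT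
          rw [Formula.realize_imp]
          intro hr
          exact ihg.2 hgT (hr (ihf.1 hfS))
      | all f =>
        have hnef : NoEqB f := by simpa [NoEqB] using hne
        have hdd : dpth f + 1 = d := by simpa [dpth] using hd
        constructor
        · intro hS
          rw [Formula.Realize, BoundedFormula.realize_all]
          intro a
          have h1 := (ih (dpth (inst1 f a)) (by rw [dpth_inst1]; omega) (inst1 f a) rfl
            (noeq_inst1 a hnef)).1 (hallS f hS a)
          rw [realize_inst1, tm_term_realize] at h1
          rwa [snoc0]
        · intro hT
          obtain ⟨t, htT⟩ := hallT f hT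
          have h1 := (ih (dpth (inst1 f t)) (by rw [dpth_inst1]; omega) (inst1 f t) rfl
            (noeq_inst1 t hnef)).2 htT
          intro hr
          rw [Formula.Realize, BoundedFormula.realize_all] at hr
          refine h1 ?_
          rw [realize_inst1, tm_term_realize]
          have := hr t
          rwa [snoc0] at this
  exact fun φ => main (dpth φ) φ rfl

end Completeness

section Final

open scoped Classical

variable {L : Language}

theorem notFullValid [Countable (Σ l, L.Functions l)] [Countable (Σ l, L.Relations l)]
    (Γ Δ : List (L.Formula ℕ)) (hEq : ∀ φ ∈ Γ ++ Δ, EqFree φ)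
    (h0 : ¬ LK false false Γ Δ) : ¬ FullValid L Γ Δ := by
  haveI hc1 : Countable (Σ n, L.BoundedFormula ℕ n) :=
    BoundedFormula.listEncode_sigma_injective.countable
  haveI hc2 : Countable (L.Formula ℕ) :=
    Function.Injective.countable
      (f := fun φ : L.Formula ℕ => (⟨0, φ⟩ : Σ n, L.BoundedFormula ℕ n))
      (fun a b hab => by simpa using hab)
  haveI : Nonempty (L.Formula ℕ × L.Term ℕ) := ⟨(⊥ : L.Formula ℕ), Term.var 0⟩
  obtain ⟨σ, hσ⟩ := exists_surjective_nat (L.Formula ℕ × L.Term ℕ)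
  set task : ℕ → L.Formula ℕ × L.Term ℕ := fun n => σ (Nat.unpair n).2 with htaskdef
  have htget : ∀ (q : L.Formula ℕ × L.Term ℕ) (m : ℕ), ∃ n, m ≤ n ∧ task n = q := by
    intro q m
    obtain ⟨j, hj⟩ := hσ q
    exact ⟨Nat.pair m j, Nat.left_le_pair m j, by simp [htaskdef, Nat.unpair_pair, hj]⟩
  set ch := chain task (Γ, Δ) with hchdef
  have hch0 : ch 0 = (Γ, Δ) := rfl
  have hchs : ∀ n, ch (n + 1) = stp (task n) (ch n) := fun n => rfl
  have hinv : ∀ n, ¬ LK false false (ch n).1 (ch n).2 := chain_inv task (Γ, Δ) h0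
  have hle : ∀ {m n : ℕ}, m ≤ n →
      (∀ x ∈ (ch m).1, x ∈ (ch n).1) ∧ (∀ x ∈ (ch m).2, x ∈ (ch n).2) :=
    fun {m n} h => chain_le task (Γ, Δ) h
  set S : Set (L.Formula ℕ) := {φ | ∃ n, φ ∈ (ch n).1} with hSdef
  set T : Set (L.Formula ℕ) := {φ | ∃ n, φ ∈ (ch n).2} with hTdef
  have hcon : ∀ φ : L.Formula ℕ, φ ∈ S → φ ∈ T → False := by
    rintro φ ⟨n, hn⟩ ⟨m, hm⟩
    refine hinv (max n m) (LK.ofMem (φ := φ) ?_ ?_)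
    · exact (hle (le_max_left n m)).1 _ hn
    · exact (hle (le_max_right n m)).2 _ hm
  have hbot : (⊥ : L.Formula ℕ) ∉ S := by
    rintro ⟨n, hn⟩
    exact hinv n (LK.ofFalsum hn)
  have himpS : ∀ f g : L.Formula ℕ, (BoundedFormula.imp f g) ∈ S → g ∈ S ∨ f ∈ T := by
    rintro f g ⟨n0, hn0⟩
    obtain ⟨n, hn, htk⟩ := htget (BoundedFormula.imp f g, Term.var 0) n0
    have hmem : BoundedFormula.imp f g ∈ (ch n).1 := (hle hn).1 _ hn0
    by_cases hd : LK false false (g :: (ch n).1) (ch n).2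
    · right
      refine ⟨n + 1, ?_⟩
      rw [hchs n, htk]
      simp only [stp, hmem, if_true, lstep, hd]
      simp
    · left
      refine ⟨n + 1, ?_⟩
      rw [hchs n, htk]
      simp only [stp, hmem, if_true, lstep, hd]
      simp
  have himpT : ∀ f g : L.Formula ℕ, (BoundedFormula.imp f g) ∈ T → f ∈ S ∧ g ∈ T := by
    rintro f g ⟨n0, hn0⟩
    obtain ⟨n, hn, htk⟩ := htget (BoundedFormula.imp f g, Term.var 0) n0
    have hmem : BoundedFormula.imp f g ∈ (ch n).2 := (hle hn).2 _ hn0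
    have hnot : BoundedFormula.imp f g ∉ (ch n).1 := fun hmem1 =>
      hcon _ ⟨n, hmem1⟩ ⟨n, hmem⟩
    constructor
    · refine ⟨n + 1, ?_⟩
      rw [hchs n, htk]
      simp only [stp, hmem, hnot, if_false, if_true, rstep]
      simp
    · refine ⟨n + 1, ?_⟩
      rw [hchs n, htk]
      simp only [stp, hmem, hnot, if_false, if_true, rstep]
      simp
  have hallS : ∀ f : L.BoundedFormula ℕ 1, (BoundedFormula.all f) ∈ S → ∀ t, inst1 f t ∈ S := by
    rintro f ⟨n0, hn0⟩ t
    obtain ⟨n, hn, htk⟩ := htget (BoundedFormula.all f, t) n0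
    have hmem : BoundedFormula.all f ∈ (ch n).1 := (hle hn).1 _ hn0
    refine ⟨n + 1, ?_⟩
    rw [hchs n, htk]
    simp only [stp, hmem, if_true, lstep]
    simp
  have hallT : ∀ f : L.BoundedFormula ℕ 1, (BoundedFormula.all f) ∈ T → ∃ t, inst1 f t ∈ T := by
    rintro f ⟨n0, hn0⟩
    obtain ⟨n, hn, htk⟩ := htget (BoundedFormula.all f, Term.var 0) n0
    have hmem : BoundedFormula.all f ∈ (ch n).2 := (hle hn).2 _ hn0
    have hnot : BoundedFormula.all f ∉ (ch n).1 := fun hmem1 => hcon _ ⟨n, hmem1⟩ ⟨n, hmem⟩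
    refine ⟨Term.var (freshV ((ch n).1 ++ (ch n).2)), n + 1, ?_⟩
    rw [hchs n, htk]
    simp only [stp, hmem, hnot, if_false, if_true, rstep]
    simp
  have htruth := truthLemma S T hcon hbot himpS himpT hallS hallT
  intro hFV
  letI SM : L.Structure (L.Term ℕ) := tmS S
  obtain ⟨enc, henc⟩ := exists_injective_nat (L.Term ℕ)
  let e : L.Term ℕ ≃ Set.range enc := Equiv.ofInjective enc henc
  letI NS : L.Structure (Set.range enc) := Equiv.inducedStructure e
  let g := Equiv.inducedStructureEquiv (L := L) e
  have hg : ∀ (φ : L.Formula ℕ) (v : ℕ → L.Term ℕ),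
      Formula.Realize φ (⇑g ∘ v) ↔ Formula.Realize φ v := fun φ v =>
    StrongHomClass.realize_formula g φ
  obtain ⟨ψ, hψΔ, hψr⟩ := hFV (Set.range enc) NS ⟨g (Term.var 0)⟩ (⇑g ∘ Term.var)
    (fun φ hφ => (hg φ Term.var).mpr
      ((htruth φ (noeqB_of_eqFree (hEq φ (List.mem_append_left _ hφ)))).1 ⟨0, hφ⟩))
  exact (htruth ψ (noeqB_of_eqFree (hEq ψ (List.mem_append_right _ hψΔ)))).2 ⟨0, hψΔ⟩
    ((hg ψ Term.var).mp hψr)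

end Final
/-- (For classical first-order logic without identity, in a countable
signature.)  A sequent `J` is derivable in cut-free `LK⁻` iff it is derivable in `LK` (with
cut), iff every full interpretation satisfies `J`, iff every `J`-interpretation satisfies
`J`. -/
theorem LKminus_LK_full_sub_equiv (L : Language)
    [Countable (Σ l, L.Functions l)] [Countable (Σ l, L.Relations l)]
    (Γ Δ : List (L.Formula ℕ)) (hEq : ∀ φ ∈ Γ ++ Δ, EqFree φ) :
    (LK (L := L) false false Γ Δ ↔ LK (L := L) true false Γ Δ) ∧
    (LK (L := L) true false Γ Δ ↔ FullValid L Γ Δ) ∧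
    (FullValid L Γ Δ ↔ SubValid L Γ Δ) := by
  have hcompl : FullValid L Γ Δ → LK false false Γ Δ := fun hf => by
    by_contra hn
    exact notFullValid Γ Δ hEq hn hf
  exact ⟨⟨fun h => PaperLK.LK.castTrue h, fun h => hcompl (lkSound h)⟩,
    ⟨lkSound, fun h => PaperLK.LK.castTrue (hcompl h)⟩,
    ⟨subValid_of_fullValid, fullValid_of_subValid⟩⟩

end PaperSat
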